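/- If A → A' and B → B' are injective homomorphisms of unital associative algebras over a field, then the induced homomorphism of coproducts (free products) A * B → A' * B' is injective. -/

import Mathlib

/-- `C` together with `ia`, `ib` is a coproduct (free product) of the unital associative
`k`-algebras `A` and `B` in the category of unital associative `k`-algebras. -/
def IsAlgCoproduct (k : Type) [Field k] {A B C : Type}
    [Ring A] [Algebra k A] [Ring B] [Algebra k B] [Ring C] [Algebra k C]
    (ia : A →ₐ[k] C) (ib : B →ₐ[k] C) : Prop :=
  ∀ (D : Type) [Ring D] [Algebra k D] (f : A →ₐ[k] D) (g : B →ₐ[k] D),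
    ∃! h : C →ₐ[k] D, h.comp ia = f ∧ h.comp ib = g


namespace FPI

variable {IA IB : Type}

/-- Alternation relation on letters. -/
def Rel : IA ⊕ IB → IA ⊕ IB → Prop := fun x y => x.isLeft ≠ y.isLeft

/-- The word does not start with an `A`-letter. -/
def noA : List (IA ⊕ IB) → Prop
  | (Sum.inl _) :: _ => False
  | _ => True

/-- The word does not start with a `B`-letter. -/
def noB : List (IA ⊕ IB) → Prop
  | (Sum.inr _) :: _ => False
  | _ => True

/-- Alternating words. -/
abbrev AW (IA IB : Type) := {l : List (IA ⊕ IB) // l.IsChain Rel}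

/-- Alternating words not starting with an `A`-letter. -/
abbrev BW (IA IB : Type) := {l : List (IA ⊕ IB) // l.IsChain Rel ∧ noA l}

/-- Alternating words not starting with a `B`-letter. -/
abbrev AWt (IA IB : Type) := {l : List (IA ⊕ IB) // l.IsChain Rel ∧ noB l}

theorem noA_of_chain (i : IA) (t : List (IA ⊕ IB)) (h : List.IsChain Rel (Sum.inl i :: t)) :
    noA t := by
  cases t with
  | nil => trivial
  | cons x t' =>
    cases x with
    | inl i' => exact absurd (List.isChain_cons_cons.mp h).1 (by simp [Rel])
    | inr j => trivial

theorem noB_of_chain (j : IB) (t : List (IA ⊕ IB)) (h : List.IsChain Rel (Sum.inr j :: t)) :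
    noB t := by
  cases t with
  | nil => trivial
  | cons x t' =>
    cases x with
    | inl i' => trivial
    | inr j' => exact absurd (List.isChain_cons_cons.mp h).1 (by simp [Rel])

theorem chain_consA (i : IA) (t : List (IA ⊕ IB)) (hc : t.IsChain Rel) (hn : noA t) :
    List.IsChain Rel (Sum.inl i :: t) := by
  cases t with
  | nil => simp
  | cons x t' =>
    cases x with
    | inl i' => exact hn.elim
    | inr j => exact List.isChain_cons_cons.mpr ⟨by simp [Rel], hc⟩

theorem chain_consB (j : IB) (t : List (IA ⊕ IB)) (hc : t.IsChain Rel) (hn : noB t) :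
    List.IsChain Rel (Sum.inr j :: t) := by
  cases t with
  | nil => simp
  | cons x t' =>
    cases x with
    | inl i => exact List.isChain_cons_cons.mpr ⟨by simp [Rel], hc⟩
    | inr j' => exact hn.elim

/-- Forward map of `equivA`. -/
def eAto : AW IA IB → Option IA × BW IA IB
  | ⟨[], _⟩ => (none, ⟨[], List.isChain_nil, trivial⟩)
  | ⟨Sum.inr j :: t, h⟩ => (none, ⟨Sum.inr j :: t, h, trivial⟩)
  | ⟨Sum.inl i :: t, h⟩ => (some i, ⟨t, h.tail, noA_of_chain i t h⟩)

/-- Backward map of `equivA`. -/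
def eAinv : Option IA × BW IA IB → AW IA IB
  | (some i, w) => ⟨Sum.inl i :: w.1, chain_consA i w.1 w.2.1 w.2.2⟩
  | (none, w) => ⟨w.1, w.2.1⟩

/-- Decomposition of alternating words according to the leading `A`-letter. -/
def equivA : AW IA IB ≃ Option IA × BW IA IB where
  toFun := eAto
  invFun := eAinv
  left_inv := by rintro ⟨(_ | ⟨(i | j), t⟩), h⟩ <;> rfl
  right_inv := by
    rintro ⟨(_ | i), ⟨(_ | ⟨(i' | j), t⟩), hc, hn⟩⟩ <;> first | rfl | exact False.elim hn

/-- Forward map of `equivB`. -/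
def eBto : AW IA IB → Option IB × AWt IA IB
  | ⟨[], _⟩ => (none, ⟨[], List.isChain_nil, trivial⟩)
  | ⟨Sum.inl i :: t, h⟩ => (none, ⟨Sum.inl i :: t, h, trivial⟩)
  | ⟨Sum.inr j :: t, h⟩ => (some j, ⟨t, h.tail, noB_of_chain j t h⟩)

/-- Backward map of `equivB`. -/
def eBinv : Option IB × AWt IA IB → AW IA IB
  | (some j, w) => ⟨Sum.inr j :: w.1, chain_consB j w.1 w.2.1 w.2.2⟩
  | (none, w) => ⟨w.1, w.2.1⟩

/-- Decomposition of alternating words according to the leading `B`-letter. -/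
def equivB : AW IA IB ≃ Option IB × AWt IA IB where
  toFun := eBto
  invFun := eBinv
  left_inv := by rintro ⟨(_ | ⟨(i | j), t⟩), h⟩ <;> rfl
  right_inv := by
    rintro ⟨(_ | j), ⟨(_ | ⟨(i | j'), t⟩), hc, hn⟩⟩ <;> first | rfl | exact False.elim hn

theorem eAto_noA (l : List (IA ⊕ IB)) (hc : l.IsChain Rel) (hn : noA l) :
    (equivA (⟨l, hc⟩ : AW IA IB)) = (none, ⟨l, hc, hn⟩) := by
  cases l with
  | nil => rfl
  | cons x t => cases x with
    | inl i => exact False.elim hn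
    | inr j => rfl

theorem eBto_noB (l : List (IA ⊕ IB)) (hc : l.IsChain Rel) (hn : noB l) :
    (equivB (⟨l, hc⟩ : AW IA IB)) = (none, ⟨l, hc, hn⟩) := by
  cases l with
  | nil => rfl
  | cons x t => cases x with
    | inl i => rfl
    | inr j => exact False.elim hn

theorem equivA_symm_cons (i : IA) (t : List (IA ⊕ IB)) (hc : t.IsChain Rel) (hn : noA t) :
    equivA.symm (some i, (⟨t, hc, hn⟩ : BW IA IB)) = ⟨Sum.inl i :: t, chain_consA i t hc hn⟩ :=
  rfl

theorem equivB_symm_cons (j : IB) (t : List (IA ⊕ IB)) (hc : t.IsChain Rel) (hn : noB t) :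
    equivB.symm (some j, (⟨t, hc, hn⟩ : AWt IA IB)) = ⟨Sum.inr j :: t, chain_consB j t hc hn⟩ :=
  rfl


noncomputable section
open scoped TensorProduct

/-- Conjugation of endomorphism algebras by a linear equivalence, as an algebra equivalence. -/
def endConj {k : Type} [CommSemiring k] {M N : Type} [AddCommMonoid M] [AddCommMonoid N]
    [Module k M] [Module k N] (e : M ≃ₗ[k] N) : Module.End k M ≃ₐ[k] Module.End k N :=
  AlgEquiv.ofLinearEquiv e.conj
    (by ext x; simp [LinearEquiv.conj_apply])
    (by intro fp gp; ext x; simp [LinearEquiv.conj_apply, Module.End.mul_apply])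

variable (k : Type) [Field k] {A' B' : Type} [Ring A'] [Algebra k A'] [Ring B'] [Algebra k B']
variable (IA IB : Type)

/-- Free module on alternating words. -/
abbrev WW := AW IA IB →₀ k

/-- Free module on alternating words without leading `A`-letter. -/
abbrev WWB := BW IA IB →₀ k

/-- Free module on alternating words without leading `B`-letter. -/
abbrev WWA := AWt IA IB →₀ k

variable {IA IB}

/-- Linear equivalence splitting off the leading `A`-letter. -/
def eqA (bA' : Module.Basis (Option IA) k A') : WW k IA IB ≃ₗ[k] A' ⊗[k] WWB k IA IB :=
  (Finsupp.basisSingleOne).equiv (bA'.tensorProduct Finsupp.basisSingleOne) equivA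

/-- Linear equivalence splitting off the leading `B`-letter. -/
def eqB (bB' : Module.Basis (Option IB) k B') : WW k IA IB ≃ₗ[k] B' ⊗[k] WWA k IA IB :=
  (Finsupp.basisSingleOne).equiv (bB'.tensorProduct Finsupp.basisSingleOne) equivB

/-- The left regular action of `A'` on the word module. -/
def actA (bA' : Module.Basis (Option IA) k A') : A' →ₐ[k] Module.End k (WW k IA IB) :=
  ((endConj (eqA k bA').symm).toAlgHom).comp
    (Algebra.lsmul k k (A' ⊗[k] WWB k IA IB) (A := A'))

/-- The left regular action of `B'` on the word module. -/
def actB (bB' : Module.Basis (Option IB) k B') : B' →ₐ[k] Module.End k (WW k IA IB) :=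
  ((endConj (eqB k bB').symm).toAlgHom).comp
    (Algebra.lsmul k k (B' ⊗[k] WWA k IA IB) (A := B'))

theorem eqA_basis (bA' : Module.Basis (Option IA) k A') (w : AW IA IB) :
    eqA k bA' (Finsupp.basisSingleOne w)
      = (bA'.tensorProduct Finsupp.basisSingleOne) (equivA w) :=
  Module.Basis.equiv_apply _ _ _ _

theorem eqA_symm_basis (bA' : Module.Basis (Option IA) k A') (p : Option IA × BW IA IB) :
    (eqA k bA').symm ((bA'.tensorProduct Finsupp.basisSingleOne) p)
      = Finsupp.basisSingleOne (equivA.symm p) := by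
  rw [LinearEquiv.symm_apply_eq, eqA_basis, Equiv.apply_symm_apply]

theorem eqB_basis (bB' : Module.Basis (Option IB) k B') (w : AW IA IB) :
    eqB k bB' (Finsupp.basisSingleOne w)
      = (bB'.tensorProduct Finsupp.basisSingleOne) (equivB w) :=
  Module.Basis.equiv_apply _ _ _ _

theorem eqB_symm_basis (bB' : Module.Basis (Option IB) k B') (p : Option IB × AWt IA IB) :
    (eqB k bB').symm ((bB'.tensorProduct Finsupp.basisSingleOne) p)
      = Finsupp.basisSingleOne (equivB.symm p) := by
  rw [LinearEquiv.symm_apply_eq, eqB_basis, Equiv.apply_symm_apply]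

theorem actA_single (bA' : Module.Basis (Option IA) k A') (h1 : bA' none = 1) (i : IA)
    (l : List (IA ⊕ IB)) (hc : l.IsChain Rel) (hn : noA l) :
    actA k bA' (bA' (some i)) (Finsupp.single (⟨l, hc⟩ : AW IA IB) 1)
      = Finsupp.single (⟨Sum.inl i :: l, chain_consA i l hc hn⟩ : AW IA IB) 1 := by
  have h0 : actA k bA' (bA' (some i)) (Finsupp.single (⟨l, hc⟩ : AW IA IB) 1)
      = (eqA k bA').symm (bA' (some i) • (eqA k bA') (Finsupp.single (⟨l, hc⟩ : AW IA IB) 1)) :=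
    rfl
  have hsingle : ∀ w : AW IA IB, Finsupp.single w (1 : k)
      = (Finsupp.basisSingleOne : Module.Basis (AW IA IB) k (WW k IA IB)) w := by
    intro w; simp
  rw [h0, hsingle, eqA_basis, eAto_noA l hc hn, Module.Basis.tensorProduct_apply, h1,
    TensorProduct.smul_tmul', smul_eq_mul, mul_one, ← Module.Basis.tensorProduct_apply,
    eqA_symm_basis, equivA_symm_cons, hsingle]
  exacts [hc, hn]

theorem actB_single (bB' : Module.Basis (Option IB) k B') (h1 : bB' none = 1) (j : IB)
    (l : List (IA ⊕ IB)) (hc : l.IsChain Rel) (hn : noB l) :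
    actB k bB' (bB' (some j)) (Finsupp.single (⟨l, hc⟩ : AW IA IB) 1)
      = Finsupp.single (⟨Sum.inr j :: l, chain_consB j l hc hn⟩ : AW IA IB) 1 := by
  have h0 : actB k bB' (bB' (some j)) (Finsupp.single (⟨l, hc⟩ : AW IA IB) 1)
      = (eqB k bB').symm (bB' (some j) • (eqB k bB') (Finsupp.single (⟨l, hc⟩ : AW IA IB) 1)) :=
    rfl
  have hsingle : ∀ w : AW IA IB, Finsupp.single w (1 : k)
      = (Finsupp.basisSingleOne : Module.Basis (AW IA IB) k (WW k IA IB)) w := by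
    intro w; simp
  rw [h0, hsingle, eqB_basis, eBto_noB l hc hn, Module.Basis.tensorProduct_apply, h1,
    TensorProduct.smul_tmul', smul_eq_mul, mul_one, ← Module.Basis.tensorProduct_apply,
    eqB_symm_basis, equivB_symm_cons, hsingle]
  exacts [hc, hn]

end
end FPI
section Master


namespace FPI
noncomputable section

variable (k : Type) [Field k] {A B C : Type}
  [Ring A] [Algebra k A] [Ring B] [Algebra k B] [Ring C] [Algebra k C]

theorem adjoin_eq_top (iA : A →ₐ[k] C) (iB : B →ₐ[k] C) (hC : IsAlgCoproduct k iA iB) :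
    Algebra.adjoin k (Set.range iA ∪ Set.range iB) = ⊤ := by
  set S := Algebra.adjoin k (Set.range iA ∪ Set.range iB) with hS
  have hA : ∀ a, iA a ∈ S := fun a => Algebra.subset_adjoin (Or.inl ⟨a, rfl⟩)
  have hB : ∀ b, iB b ∈ S := fun b => Algebra.subset_adjoin (Or.inr ⟨b, rfl⟩)
  obtain ⟨u, ⟨huA, huB⟩, -⟩ := hC S (iA.codRestrict S hA) (iB.codRestrict S hB)
  obtain ⟨v, -, hvuniq⟩ := hC C iA iB
  have e1 : (S.val.comp u).comp iA = iA := by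
    rw [AlgHom.comp_assoc, huA]; ext a; rfl
  have e2 : (S.val.comp u).comp iB = iB := by
    rw [AlgHom.comp_assoc, huB]; ext b; rfl
  have h1 : S.val.comp u = AlgHom.id k C := by
    rw [hvuniq _ ⟨e1, e2⟩, hvuniq (AlgHom.id k C) ⟨by ext; rfl, by ext; rfl⟩]
  rw [eq_top_iff]
  intro x _
  have hx : S.val (u x) = x := by
    have := congrArg (fun φ : C →ₐ[k] C => φ x) h1
    simpa using this
  exact hx ▸ (u x).2

variable {PA PB : Type}

/-- The letters, as elements of `C`. -/
def ltr (iA : A →ₐ[k] C) (iB : B →ₐ[k] C) (bA : Module.Basis (Option PA) k A)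
    (bB : Module.Basis (Option PB) k B) : PA ⊕ PB → C :=
  Sum.elim (fun p => iA (bA (some p))) (fun q => iB (bB (some q)))

/-- The product of a word's letters in `C`. -/
def wd (iA : A →ₐ[k] C) (iB : B →ₐ[k] C) (bA : Module.Basis (Option PA) k A)
    (bB : Module.Basis (Option PB) k B) (l : List (PA ⊕ PB)) : C :=
  (l.map (ltr k iA iB bA bB)).prod

theorem wd_nil (iA : A →ₐ[k] C) (iB : B →ₐ[k] C) (bA : Module.Basis (Option PA) k A)
    (bB : Module.Basis (Option PB) k B) : wd k iA iB bA bB [] = 1 := rfl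

theorem wd_cons (iA : A →ₐ[k] C) (iB : B →ₐ[k] C) (bA : Module.Basis (Option PA) k A)
    (bB : Module.Basis (Option PB) k B) (x : PA ⊕ PB) (t : List (PA ⊕ PB)) :
    wd k iA iB bA bB (x :: t) = ltr k iA iB bA bB x * wd k iA iB bA bB t := by
  simp [wd]

theorem wd_span_top (iA : A →ₐ[k] C) (iB : B →ₐ[k] C) (hC : IsAlgCoproduct k iA iB)
    (bA : Module.Basis (Option PA) k A) (bB : Module.Basis (Option PB) k B)
    (h1A : bA none = 1) (h1B : bB none = 1) :
    Submodule.span k (Set.range (fun w : AW PA PB => wd k iA iB bA bB w.1)) = ⊤ := by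
  set S := Submodule.span k (Set.range (fun w : AW PA PB => wd k iA iB bA bB w.1)) with hSdef
  have hwdmem : ∀ (l : List (PA ⊕ PB)) (hc : l.IsChain Rel), wd k iA iB bA bB l ∈ S :=
    fun l hc => Submodule.subset_span ⟨⟨l, hc⟩, rfl⟩
  -- left multiplication by iA a preserves S, words not starting with A
  have hmemA : ∀ (a : A) (l : List (PA ⊕ PB)) (hc : l.IsChain Rel) (hn : noA l),
      iA a * wd k iA iB bA bB l ∈ S := by
    intro a l hc hn
    let φ : A →ₗ[k] C := (LinearMap.mulRight k (wd k iA iB bA bB l)).comp iA.toLinearMap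
    suffices hs : ⊤ ≤ Submodule.comap φ S by
      have := hs (Set.mem_univ a)
      simpa [φ] using this
    rw [← bA.span_eq]
    refine Submodule.span_le.mpr ?_
    rintro _ ⟨i, rfl⟩
    have : φ (bA i) = iA (bA i) * wd k iA iB bA bB l := by simp [φ]
    cases i with
    | none =>
      refine Submodule.mem_comap.mpr ?_
      rw [this, h1A, map_one, one_mul]
      exact hwdmem l hc
    | some p =>
      refine Submodule.mem_comap.mpr ?_
      rw [this]
      have hw : iA (bA (some p)) * wd k iA iB bA bB l
          = wd k iA iB bA bB (Sum.inl p :: l) := by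
        rw [wd_cons]; rfl
      rw [hw]
      exact hwdmem _ (chain_consA p l hc hn)
  have hmemB : ∀ (b : B) (l : List (PA ⊕ PB)) (hc : l.IsChain Rel) (hn : noB l),
      iB b * wd k iA iB bA bB l ∈ S := by
    intro b l hc hn
    let φ : B →ₗ[k] C := (LinearMap.mulRight k (wd k iA iB bA bB l)).comp iB.toLinearMap
    suffices hs : ⊤ ≤ Submodule.comap φ S by
      have := hs (Set.mem_univ b)
      simpa [φ] using this
    rw [← bB.span_eq]
    refine Submodule.span_le.mpr ?_
    rintro _ ⟨i, rfl⟩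
    have : φ (bB i) = iB (bB i) * wd k iA iB bA bB l := by simp [φ]
    cases i with
    | none =>
      refine Submodule.mem_comap.mpr ?_
      rw [this, h1B, map_one, one_mul]
      exact hwdmem l hc
    | some q =>
      refine Submodule.mem_comap.mpr ?_
      rw [this]
      have hw : iB (bB (some q)) * wd k iA iB bA bB l
          = wd k iA iB bA bB (Sum.inr q :: l) := by
        rw [wd_cons]; rfl
      rw [hw]
      exact hwdmem _ (chain_consB q l hc hn)
  have hgenA : ∀ (a : A) (l : List (PA ⊕ PB)) (hc : l.IsChain Rel),
      iA a * wd k iA iB bA bB l ∈ S := by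
    intro a l hc
    cases l with
    | nil => exact hmemA a [] hc trivial
    | cons x t =>
      cases x with
      | inr q => exact hmemA a _ hc trivial
      | inl p =>
        have hw : wd k iA iB bA bB (Sum.inl p :: t)
            = iA (bA (some p)) * wd k iA iB bA bB t := by rw [wd_cons]; rfl
        rw [hw, ← mul_assoc, ← map_mul]
        exact hmemA (a * bA (some p)) t hc.tail (noA_of_chain p t hc)
  have hgenB : ∀ (b : B) (l : List (PA ⊕ PB)) (hc : l.IsChain Rel),
      iB b * wd k iA iB bA bB l ∈ S := by
    intro b l hc
    cases l with
    | nil => exact hmemB b [] hc trivial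
    | cons x t =>
      cases x with
      | inl p => exact hmemB b _ hc trivial
      | inr q =>
        have hw : wd k iA iB bA bB (Sum.inr q :: t)
            = iB (bB (some q)) * wd k iA iB bA bB t := by rw [wd_cons]; rfl
        rw [hw, ← mul_assoc, ← map_mul]
        exact hmemB (b * bB (some q)) t hc.tail (noB_of_chain q t hc)
  -- the set of elements whose left multiplication preserves S is a subalgebra
  let T : Subalgebra k C :=
    { carrier := {x | ∀ s ∈ S, x * s ∈ S}
      mul_mem' := fun {x y} hx hy s hs => by
        rw [mul_assoc]; exact hx _ (hy _ hs)
      add_mem' := fun {x y} hx hy s hs => by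
        rw [add_mul]; exact S.add_mem (hx s hs) (hy s hs)
      algebraMap_mem' := fun r s hs => by
        rw [← Algebra.smul_def]; exact S.smul_mem r hs }
  have hTA : ∀ a, iA a ∈ T := by
    intro a s hs
    induction hs using Submodule.span_induction with
    | mem x hx =>
      obtain ⟨w, rfl⟩ := hx
      exact hgenA a w.1 w.2
    | zero => rw [mul_zero]; exact S.zero_mem
    | add x y _ _ hx hy => rw [mul_add]; exact S.add_mem hx hy
    | smul c x _ hx => rw [mul_smul_comm]; exact S.smul_mem c hx
  have hTB : ∀ b, iB b ∈ T := by
    intro b s hs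
    induction hs using Submodule.span_induction with
    | mem x hx =>
      obtain ⟨w, rfl⟩ := hx
      exact hgenB b w.1 w.2
    | zero => rw [mul_zero]; exact S.zero_mem
    | add x y _ _ hx hy => rw [mul_add]; exact S.add_mem hx hy
    | smul c x _ hx => rw [mul_smul_comm]; exact S.smul_mem c hx
  have hT : T = ⊤ := by
    rw [eq_top_iff, ← adjoin_eq_top k iA iB hC]
    refine Algebra.adjoin_le ?_
    rintro x (⟨a, rfl⟩ | ⟨b, rfl⟩)
    exacts [hTA a, hTB b]
  rw [eq_top_iff]
  intro x _
  have hx : x ∈ T := hT ▸ Algebra.mem_top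
  have := hx (wd k iA iB bA bB []) (hwdmem [] List.isChain_nil)
  rwa [wd_nil, mul_one] at this

end
end FPI
end Master
namespace FPI
noncomputable section

theorem master
    (k : Type) [Field k]
    {A A' B B' C C' : Type}
    [Ring A] [Algebra k A] [Ring A'] [Algebra k A']
    [Ring B] [Algebra k B] [Ring B'] [Algebra k B']
    [Ring C] [Algebra k C] [Ring C'] [Algebra k C']
    (iA : A →ₐ[k] C) (iB : B →ₐ[k] C) (hC : IsAlgCoproduct k iA iB)
    (iA' : A' →ₐ[k] C') (iB' : B' →ₐ[k] C') (hC' : IsAlgCoproduct k iA' iB')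
    (f : A →ₐ[k] A') (g : B →ₐ[k] B')
    (h : C →ₐ[k] C')
    (hhA : h.comp iA = iA'.comp f) (hhB : h.comp iB = iB'.comp g)
    {PA PB IA IB : Type}
    (bA : Module.Basis (Option PA) k A) (bB : Module.Basis (Option PB) k B)
    (bA' : Module.Basis (Option IA) k A') (bB' : Module.Basis (Option IB) k B')
    (h1A : bA none = 1) (h1B : bB none = 1)
    (h1A' : bA' none = 1) (h1B' : bB' none = 1)
    (jA : PA → IA) (jB : PB → IB)
    (hjA : Function.Injective jA) (hjB : Function.Injective jB)
    (hfA : ∀ p, f (bA (some p)) = bA' (some (jA p)))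
    (hfB : ∀ q, g (bB (some q)) = bB' (some (jB q))) :
    Function.Injective h := by
  classical
  obtain ⟨ρ, ⟨hρA, hρB⟩, -⟩ :=
    hC' (Module.End k (WW k IA IB)) (actA k bA') (actB k bB')
  set σ : C →ₐ[k] Module.End k (WW k IA IB) := ρ.comp h with hσdef
  have hσA : ∀ a, σ (iA a) = actA k bA' (f a) := by
    intro a
    have h1 : σ (iA a) = ρ (h (iA a)) := rfl
    have h2 : h (iA a) = iA' (f a) := DFunLike.congr_fun hhA a
    have h3 : ρ (iA' (f a)) = actA k bA' (f a) := DFunLike.congr_fun hρA (f a)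
    rw [h1, h2, h3]
  have hσB : ∀ b, σ (iB b) = actB k bB' (g b) := by
    intro b
    have h1 : σ (iB b) = ρ (h (iB b)) := rfl
    have h2 : h (iB b) = iB' (g b) := DFunLike.congr_fun hhB b
    have h3 : ρ (iB' (g b)) = actB k bB' (g b) := DFunLike.congr_fun hρB (g b)
    rw [h1, h2, h3]
  -- mapped words
  have hjmap : Function.Injective (Sum.map jA jB) := by
    rintro (p | q) (p' | q') hh <;>
      simp only [Sum.map_inl, Sum.map_inr, Sum.inl.injEq, Sum.inr.injEq,
        reduceCtorEq] at hh
    · exact congrArg _ (hjA hh)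
    · exact congrArg _ (hjB hh)
  have hmpchain : ∀ l : List (PA ⊕ PB), l.IsChain Rel →
      (l.map (Sum.map jA jB)).IsChain Rel := by
    intro l hl
    rw [List.isChain_map]
    refine hl.imp ?_
    intro x y hxy
    simpa [Rel] using hxy
  have hmpnoA : ∀ l : List (PA ⊕ PB), noA l → noA (l.map (Sum.map jA jB)) := by
    intro l hl
    cases l with
    | nil => trivial
    | cons x t => cases x with
      | inl p => exact False.elim hl
      | inr q => trivial
  have hmpnoB : ∀ l : List (PA ⊕ PB), noB l → noB (l.map (Sum.map jA jB)) := by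
    intro l hl
    cases l with
    | nil => trivial
    | cons x t => cases x with
      | inl p => trivial
      | inr q => exact False.elim hl
  set one₀ : WW k IA IB := Finsupp.single ⟨[], List.isChain_nil⟩ 1 with hone₀
  have evw : ∀ (l : List (PA ⊕ PB)) (hc : l.IsChain Rel),
      σ (wd k iA iB bA bB l) one₀
        = Finsupp.single (⟨l.map (Sum.map jA jB), hmpchain l hc⟩ : AW IA IB) 1 := by
    intro l
    induction l with
    | nil =>
      intro hc
      rw [wd_nil, map_one]
      rfl
    | cons x t ih =>
      intro hc
      have hct : t.IsChain Rel := hc.tail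
      rw [wd_cons, map_mul, Module.End.mul_apply, ih hct]
      cases x with
      | inl p =>
        have hn : noA t := noA_of_chain p t hc
        have hltr : ltr k iA iB bA bB (Sum.inl p) = iA (bA (some p)) := rfl
        rw [hltr, hσA, hfA, actA_single k bA' h1A' (jA p) _ (hmpchain t hct)
          (hmpnoA t hn)]
        rfl
      | inr q =>
        have hn : noB t := noB_of_chain q t hc
        have hltr : ltr k iA iB bA bB (Sum.inr q) = iB (bB (some q)) := rfl
        rw [hltr, hσB, hfB, actB_single k bB' h1B' (jB q) _ (hmpchain t hct)
          (hmpnoB t hn)]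
        rfl
  -- linear evaluation map
  set E : C →ₗ[k] WW k IA IB :=
    (LinearMap.applyₗ one₀).comp σ.toLinearMap with hEdef
  have hE : ∀ c, E c = σ c one₀ := fun c => rfl
  set Φ := Finsupp.linearCombination k (fun w : AW PA PB => wd k iA iB bA bB w.1) with hΦdef
  have hΦsurj : Function.Surjective Φ := by
    rw [← LinearMap.range_eq_top, hΦdef, Finsupp.range_linearCombination]
    exact wd_span_top k iA iB hC bA bB h1A h1B
  set mpw : AW PA PB → AW IA IB :=
    fun w => ⟨w.1.map (Sum.map jA jB), hmpchain w.1 w.2⟩ with hmpwdef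
  have hmpw_inj : Function.Injective mpw := by
    intro w w' hww
    have := congrArg Subtype.val hww
    exact Subtype.ext ((List.map_injective_iff.mpr hjmap) this)
  have hcomm : E.comp Φ = Finsupp.lmapDomain k k mpw := by
    refine Finsupp.lhom_ext' fun w => LinearMap.ext_ring ?_
    simp only [LinearMap.comp_apply, Finsupp.lsingle_apply, Finsupp.lmapDomain_apply]
    have h1 : Φ (Finsupp.single w (1 : k)) = wd k iA iB bA bB w.1 := by
      rw [hΦdef, Finsupp.linearCombination_single, one_smul]
    rw [h1, hE, evw w.1 w.2, Finsupp.mapDomain_single]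
  have hEinj : Function.Injective E := by
    intro x y hxy
    obtain ⟨u, rfl⟩ := hΦsurj x
    obtain ⟨v, rfl⟩ := hΦsurj y
    have h1 : Finsupp.mapDomain mpw u = Finsupp.mapDomain mpw v := by
      have hu := DFunLike.congr_fun hcomm u
      have hv := DFunLike.congr_fun hcomm v
      simp only [LinearMap.comp_apply, Finsupp.lmapDomain_apply] at hu hv
      rw [← hu, ← hv]
      exact hxy
    rw [Finsupp.mapDomain_injective hmpw_inj h1]
  intro x y hxy
  apply hEinj
  rw [hE, hE]
  show (ρ.comp h) x one₀ = (ρ.comp h) y one₀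
  simp only [AlgHom.comp_apply, hxy]

end
end FPI
namespace FPI
noncomputable section

/-- Splitting off a distinguished element from a type. -/
def optEquiv {α : Type} [DecidableEq α] (a : α) : α ≃ Option {x : α // x ≠ a} where
  toFun x := if h : x = a then none else some ⟨x, h⟩
  invFun o := Option.elim o a Subtype.val
  left_inv x := by by_cases h : x = a <;> simp [h]
  right_inv o := by
    rcases o with _ | ⟨x, hx⟩
    · simp
    · simp [hx]

theorem optEquiv_symm_none {α : Type} [DecidableEq α] (a : α) :
    (optEquiv a).symm none = a := rfl

theorem optEquiv_symm_some {α : Type} [DecidableEq α] (a : α) (x : {x : α // x ≠ a}) :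
    (optEquiv a).symm (some x) = x.1 := rfl

/-- Given an injective algebra map `f : A →ₐ[k] A'` with `A` nontrivial, there are bases of
`A` and `A'` containing `1`, such that `f` maps the non-unit part of the first into the
non-unit part of the second. -/
theorem exists_bases (k : Type) [Field k] {A A' : Type} [Ring A] [Algebra k A]
    [Ring A'] [Algebra k A'] (f : A →ₐ[k] A') (hf : Function.Injective f)
    (h1 : (1 : A) ≠ 0) :
    ∃ (PA IA : Type) (bA : Module.Basis (Option PA) k A) (bA' : Module.Basis (Option IA) k A')
      (jA : PA → IA),
      bA none = 1 ∧ bA' none = 1 ∧ Function.Injective jA ∧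
        ∀ p, f (bA (some p)) = bA' (some (jA p)) := by
  classical
  have li1 : LinearIndepOn k id ({(1 : A)} : Set A) :=
    (linearIndepOn_singleton_iff k).mpr h1
  set sA := li1.extend (Set.subset_univ _) with hsAdef
  have h1sA : (1 : A) ∈ sA := li1.subset_extend _ rfl
  set bA0 : Module.Basis ↥sA k A := Module.Basis.extend li1 with hbA0
  have hbA0val : ∀ x : ↥sA, bA0 x = ↑x := fun x => Module.Basis.extend_apply_self li1 x
  -- basis of A'
  have liA : LinearIndependent k ((↑) : ↥sA → A) := by
    have := bA0.linearIndependent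
    rwa [hbA0, Module.Basis.coe_extend] at this
  have liA2 : LinearIndependent k (fun x : ↥sA => f (x : A)) := by
    have := liA.map' f.toLinearMap (LinearMap.ker_eq_bot.mpr (by exact hf))
    exact this
  have liimg : LinearIndepOn k id (⇑f '' sA) := LinearIndepOn.id_image (v := ⇑f) liA2
  set sA' := liimg.extend (Set.subset_univ _) with hsA'def
  have hsub : ⇑f '' sA ⊆ sA' := liimg.subset_extend _
  have h1sA' : (1 : A') ∈ sA' := hsub ⟨1, h1sA, map_one f⟩
  set bA'0 : Module.Basis ↥sA' k A' := Module.Basis.extend liimg with hbA'0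
  have hbA'0val : ∀ x : ↥sA', bA'0 x = ↑x := fun x => Module.Basis.extend_apply_self liimg x
  refine ⟨{x : ↥sA // x ≠ ⟨1, h1sA⟩}, {x : ↥sA' // x ≠ ⟨1, h1sA'⟩},
    bA0.reindex (optEquiv (⟨1, h1sA⟩ : ↥sA)), bA'0.reindex (optEquiv (⟨1, h1sA'⟩ : ↥sA')),
    fun p => ⟨⟨f ↑↑p, hsub ⟨↑↑p, p.1.2, rfl⟩⟩, ?_⟩, ?_, ?_, ?_, ?_⟩
  · -- f p ≠ 1
    intro heq
    have hval : f ↑↑p = (1 : A') := congrArg Subtype.val heq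
    rw [← map_one f] at hval
    have : (↑↑p : A) = 1 := hf hval
    exact p.2 (Subtype.ext this)
  · rw [Module.Basis.reindex_apply, optEquiv_symm_none, hbA0val]
  · rw [Module.Basis.reindex_apply, optEquiv_symm_none, hbA'0val]
  · -- injectivity
    intro p p' hpp
    have h1' : f ↑↑p = f ↑↑p' := by
      have := congrArg (fun x => (Subtype.val (Subtype.val x) : A')) hpp
      simpa using this
    exact Subtype.ext (Subtype.ext (hf h1'))
  · intro p
    rw [Module.Basis.reindex_apply, Module.Basis.reindex_apply, optEquiv_symm_some, optEquiv_symm_some,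
      hbA0val, hbA'0val]

end
end FPI

/-- If `A → A'` and `B → B'` are injective homomorphisms of unital
associative algebras over a field `k`, then the induced homomorphism of coproducts
(free products) `A * B → A' * B'` is injective. -/
theorem free_product_map_injective
    (k : Type) [Field k]
    (A A' B B' C C' : Type)
    [Ring A] [Algebra k A] [Ring A'] [Algebra k A']
    [Ring B] [Algebra k B] [Ring B'] [Algebra k B']
    [Ring C] [Algebra k C] [Ring C'] [Algebra k C']
    (iA : A →ₐ[k] C) (iB : B →ₐ[k] C) (hC : IsAlgCoproduct k iA iB)
    (iA' : A' →ₐ[k] C') (iB' : B' →ₐ[k] C') (hC' : IsAlgCoproduct k iA' iB')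
    (f : A →ₐ[k] A') (g : B →ₐ[k] B')
    (hf : Function.Injective f) (hg : Function.Injective g)
    (h : C →ₐ[k] C')
    (hhA : h.comp iA = iA'.comp f) (hhB : h.comp iB = iB'.comp g) :
    Function.Injective h := by
  by_cases h1A0 : (1 : A) = 0
  · have h0 : (0 : C) = 1 := by rw [← map_one iA, h1A0, map_zero]
    have : Subsingleton C := subsingleton_of_zero_eq_one h0
    intro x y _
    exact Subsingleton.elim x y
  by_cases h1B0 : (1 : B) = 0
  · have h0 : (0 : C) = 1 := by rw [← map_one iB, h1B0, map_zero]
    have : Subsingleton C := subsingleton_of_zero_eq_one h0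
    intro x y _
    exact Subsingleton.elim x y
  obtain ⟨PA, IA, bA, bA', jA, h1A, h1A', hjA, hfA⟩ := FPI.exists_bases k f hf h1A0
  obtain ⟨PB, IB, bB, bB', jB, h1B, h1B', hjB, hfB⟩ := FPI.exists_bases k g hg h1B0
  exact FPI.master k iA iB hC iA' iB' hC' f g h hhA hhB bA bB bA' bB'
    h1A h1B h1A' h1B' jA jB hjA hjB hfA hfB
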